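/- Let G be a tree on vertex set O ∪ H with O, H disjoint, such that (i) no edge of G connects two vertices of H and (ii) every vertex h ∈ H has degree at least 3 in G. Let G_m be the graph on O obtained by marginalizing H, i.e., i,j ∈ O are adjacent in G_m iff they are adjacent in G or share a common neighbor in H. Then distinct hidden vertices h, h' ∈ H have neighborhoods N(h), N(h') ⊆ O that are distinct sets, and each N(h) forms a clique of size ≥ 3 in G_m. -/

import Mathlib

open Sum

/-- The marginal graph adjacency on the observed vertices `O`, obtained by
marginalizing the hidden vertices `H`: `i` and `j` are adjacent iff they are
adjacent in `G` or share a common hidden neighbor. -/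
def marginalAdj {O H : Type*} (G : SimpleGraph (O ⊕ H)) (i j : O) : Prop :=
  G.Adj (inl i) (inl j) ∨ ∃ h : H, G.Adj (inr h) (inl i) ∧ G.Adj (inr h) (inl j)

/-- Let `G` be a tree on `O ∪ H` such that no edge joins two hidden vertices and
every hidden vertex has degree at least 3. Then distinct hidden vertices have
distinct neighborhoods, and the neighborhood of each hidden vertex forms a clique
of size at least 3 in the marginal graph on `O`. -/
theorem hidden_neighborhoods_distinct_and_cliques
    {O H : Type*} [Fintype O] [Fintype H]
    (G : SimpleGraph (O ⊕ H)) (hG : G.IsTree)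
    (hHH : ∀ h h' : H, ¬G.Adj (inr h) (inr h'))
    (hdeg : ∀ h : H, 3 ≤ (G.neighborSet (inr h)).ncard) :
    (∀ h h' : H, h ≠ h' → G.neighborSet (inr h) ≠ G.neighborSet (inr h')) ∧
      ∀ h : H,
        3 ≤ (G.neighborSet (inr h)).ncard ∧
          ∀ i j : O, inl i ∈ G.neighborSet (inr h) → inl j ∈ G.neighborSet (inr h) →
            i ≠ j → marginalAdj G i j := by
  constructor
  · intro h h' hne heq
    -- get two distinct neighbors of h
    have hfin : (G.neighborSet (inr h)).Finite := Set.toFinite _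
    have h2 : 1 < (G.neighborSet (inr h)).ncard := lt_of_lt_of_le (by norm_num) (hdeg h)
    obtain ⟨a, b, ha, hb, hab⟩ := (Set.one_lt_ncard_iff hfin).mp h2
    -- a, b must be inl
    obtain ⟨a0, rfl⟩ : ∃ a0 : O, a = inl a0 := by
      cases a with
      | inl x => exact ⟨x, rfl⟩
      | inr x => exact absurd ha (hHH h x)
    obtain ⟨b0, rfl⟩ : ∃ b0 : O, b = inl b0 := by
      cases b with
      | inl x => exact ⟨x, rfl⟩
      | inr x => exact absurd hb (hHH h x)
    have ha' : G.Adj (inr h') (inl a0) := by have : inl a0 ∈ G.neighborSet (inr h') := heq ▸ ha; exact this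
    have hb' : G.Adj (inr h') (inl b0) := by have : inl b0 ∈ G.neighborSet (inr h') := heq ▸ hb; exact this
    have hhh' : (inr h : O ⊕ H) ≠ inr h' := by simp [hne]
    replace ha : G.Adj (inr h) (inl a0) := ha
    have hpa : (SimpleGraph.Walk.cons (ha : G.Adj (inr h) (inl a0))
        (SimpleGraph.Walk.cons ha'.symm SimpleGraph.Walk.nil)).IsPath := by
      simp [SimpleGraph.Walk.isPath_def, hhh']
    replace hb : G.Adj (inr h) (inl b0) := hb
    have hpb : (SimpleGraph.Walk.cons (hb : G.Adj (inr h) (inl b0))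
        (SimpleGraph.Walk.cons hb'.symm SimpleGraph.Walk.nil)).IsPath := by
      simp [SimpleGraph.Walk.isPath_def, hhh']
    have huniq := SimpleGraph.isAcyclic_iff_path_unique.mp hG.IsAcyclic
      ⟨_, hpa⟩ ⟨_, hpb⟩
    have hsupp := congrArg (fun p : G.Path (inr h) (inr h') => p.1.support) huniq
    simp [SimpleGraph.Walk.support_cons] at hsupp
    exact hab (by simp [hsupp])
  · intro h
    refine ⟨hdeg h, fun i j hi hj hij => Or.inr ⟨h, hi, hj⟩⟩
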